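/- Let b₁ ≠ 0, b₂ < 0, 0 < ℓ̃_d < ℓ̃_u, ρ̃₁₂ > 0, and let C₀ = (1 − e^{b₁(ℓ̃_u−ℓ̃_d)} + b₁(ℓ̃_u−ℓ̃_d)e^{b₁ℓ̃_u} − (b₁²/b₂)(ℓ̃_u−ℓ̃_d)ρ̃₁₂ e^{b₁ℓ̃_u})^{−1}. Define f on ℝ by f(x) = C₀b₁(e^{b₁(ℓ̃_u−ℓ̃_d)}−1)e^{b₁x} for x ∈ [0,ℓ̃_d), f(x) = C₀b₁(e^{b₁ℓ̃_u} − e^{b₁x}) + (C₀ρ̃₁₂/b₂)b₁²e^{b₁ℓ̃_u}(e^{b₂(x−ℓ̃_d)}−1) for x ∈ [ℓ̃_d,ℓ̃_u], f(x) = (C₀ρ̃₁₂(e^{b₂(ℓ̃_u−ℓ̃_d)}−1)/b₂)b₁²e^{b₁ℓ̃_u}e^{b₂(x−ℓ̃_u)} for x > ℓ̃_u, and f(x) = 0 for x < 0. Then ∫_ℝ f(x) dx = 1. -/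

import Mathlib

open Real MeasureTheory Set Filter Topology

set_option maxHeartbeats 1000000 in
theorem limiting_density_integrates_to_one (b₁ b₂ ld lu ρ₁₂ C₀ : ℝ)
    (hb₁ : b₁ ≠ 0) (hb₂ : b₂ < 0) (hld : 0 < ld) (hdu : ld < lu) (hρ : 0 < ρ₁₂)
    (hden : 1 - exp (b₁ * (lu - ld)) + b₁ * (lu - ld) * exp (b₁ * lu) -
        b₁ ^ 2 / b₂ * (lu - ld) * ρ₁₂ * exp (b₁ * lu) ≠ 0)
    (hC₀ : C₀ = (1 - exp (b₁ * (lu - ld)) + b₁ * (lu - ld) * exp (b₁ * lu) -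
        b₁ ^ 2 / b₂ * (lu - ld) * ρ₁₂ * exp (b₁ * lu))⁻¹)
    (f : ℝ → ℝ)
    (hf : f = fun x =>
      if x < 0 then 0
      else if x < ld then C₀ * b₁ * (exp (b₁ * (lu - ld)) - 1) * exp (b₁ * x)
      else if x ≤ lu then
        C₀ * b₁ * (exp (b₁ * lu) - exp (b₁ * x)) +
          C₀ * ρ₁₂ / b₂ * b₁ ^ 2 * exp (b₁ * lu) * (exp (b₂ * (x - ld)) - 1)
      else
        C₀ * ρ₁₂ * (exp (b₂ * (lu - ld)) - 1) / b₂ * b₁ ^ 2 * exp (b₁ * lu) *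
          exp (b₂ * (x - lu))) :
    ∫ x : ℝ, f x = 1 := by
  have hb₂' : b₂ ≠ 0 := ne_of_lt hb₂
  set A : ℝ := C₀ * b₁ * (exp (b₁ * (lu - ld)) - 1) with hA
  set K : ℝ := C₀ * ρ₁₂ / b₂ * b₁ ^ 2 * exp (b₁ * lu) with hK
  set D : ℝ := C₀ * ρ₁₂ * (exp (b₂ * (lu - ld)) - 1) / b₂ * b₁ ^ 2 * exp (b₁ * lu) with hD
  set g₁ : ℝ → ℝ := fun x => A * exp (b₁ * x) with hg₁
  set g₂ : ℝ → ℝ := fun x =>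
    C₀ * b₁ * (exp (b₁ * lu) - exp (b₁ * x)) + K * (exp (b₂ * (x - ld)) - 1) with hg₂
  set g₃ : ℝ → ℝ := fun x => D * exp (b₂ * (x - lu)) with hg₃
  have hcont1 : Continuous g₁ := by fun_prop
  have hcont2 : Continuous g₂ := by fun_prop
  have hcont3 : Continuous g₃ := by fun_prop
  -- f agrees with the pieces on open intervals
  have heq1 : EqOn g₁ f (Ioo 0 ld) := by
    intro x hx
    rw [hf]
    simp only [not_lt.2 hx.1.le, hx.2, if_true, if_false]
    rfl
  have heq2 : EqOn g₂ f (Ioo ld lu) := by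
    intro x hx
    rw [hf]
    simp only [not_lt.2 (le_of_lt (hld.trans hx.1)), not_lt.2 hx.1.le, hx.2.le,
      if_true, if_false]
    rfl
  have heq3 : EqOn g₃ f (Ioi lu) := by
    intro x hx
    rw [hf]
    simp only [not_lt.2 (le_of_lt ((hld.trans hdu).trans hx)),
      not_lt.2 (le_of_lt (hdu.trans hx)), not_le.2 (Set.mem_Ioi.mp hx), if_true, if_false]
    rfl
  -- integrabilities
  have hIg₁ : IntegrableOn g₁ (Ioc 0 ld) :=
    (intervalIntegrable_iff_integrableOn_Ioc_of_le hld.le).1 (hcont1.intervalIntegrable 0 ld)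
  have hIg₂ : IntegrableOn g₂ (Ioc ld lu) :=
    (intervalIntegrable_iff_integrableOn_Ioc_of_le hdu.le).1 (hcont2.intervalIntegrable ld lu)
  have hI1 : IntegrableOn f (Ioc 0 ld) := by
    rw [integrableOn_Ioc_iff_integrableOn_Ioo]
    exact (hIg₁.mono_set Ioo_subset_Ioc_self).congr_fun heq1 measurableSet_Ioo
  have hI2 : IntegrableOn f (Ioc ld lu) := by
    rw [integrableOn_Ioc_iff_integrableOn_Ioo]
    exact (hIg₂.mono_set Ioo_subset_Ioc_self).congr_fun heq2 measurableSet_Ioo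
  have hIg₃ : IntegrableOn g₃ (Ioi lu) := by
    have h : IntegrableOn (fun x => (D * exp (-(b₂ * lu))) * exp (-(-b₂) * x)) (Ioi lu) :=
      (exp_neg_integrableOn_Ioi lu (neg_pos.2 hb₂)).const_mul _
    refine IntegrableOn.congr_fun h (fun x _ => ?_) measurableSet_Ioi
    show (D * exp (-(b₂ * lu))) * exp (-(-b₂) * x) = D * exp (b₂ * (x - lu))
    rw [mul_assoc, ← Real.exp_add]
    congr 2
    ring
  have hI3 : IntegrableOn f (Ioi lu) :=
    hIg₃.congr_fun heq3 measurableSet_Ioi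
  -- the support is in Ici 0
  have hsupp : ∀ x, x ∉ Ici (0:ℝ) → f x = 0 := by
    intro x hx
    simp only [mem_Ici, not_le] at hx
    rw [hf]
    simp only [hx, if_true]
  -- split the integral
  have hunion1 : Ioc ld lu ∪ Ioi lu = Ioi ld := Ioc_union_Ioi_eq_Ioi hdu.le
  have hunion2 : Ioc 0 ld ∪ Ioi ld = Ioi 0 := Ioc_union_Ioi_eq_Ioi hld.le
  have hdisj1 : Disjoint (Ioc ld lu) (Ioi lu) := by
    rw [Set.disjoint_left]; intro x hx hx'; exact absurd hx.2 (not_le.2 hx')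
  have hdisj2 : Disjoint (Ioc 0 ld) (Ioi ld) := by
    rw [Set.disjoint_left]; intro x hx hx'; exact absurd hx.2 (not_le.2 hx')
  have hI23 : IntegrableOn f (Ioi ld) := by
    rw [← hunion1]; exact (integrableOn_union).2 ⟨hI2, hI3⟩
  have hsplit : ∫ x : ℝ, f x =
      (∫ x in Ioc 0 ld, f x) + ((∫ x in Ioc ld lu, f x) + ∫ x in Ioi lu, f x) := by
    rw [← setIntegral_eq_integral_of_forall_compl_eq_zero hsupp,
      integral_Ici_eq_integral_Ioi, ← hunion2,
      setIntegral_union hdisj2 measurableSet_Ioi hI1 hI23, ← hunion1,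
      setIntegral_union hdisj1 measurableSet_Ioi hI2 hI3]
  -- derivative helpers
  have hexp : ∀ c x : ℝ, HasDerivAt (fun y => exp (c * y)) (exp (c * x) * c) x := by
    intro c x
    simpa using ((hasDerivAt_id x).const_mul c).exp
  have hexp' : ∀ c d x : ℝ, HasDerivAt (fun y => exp (c * (y - d))) (exp (c * (x - d)) * c) x := by
    intro c d x
    have h : HasDerivAt (fun y : ℝ => c * (y - d)) c x := by
      simpa using ((hasDerivAt_id x).sub_const d).const_mul c
    exact h.exp
  -- piece 1
  have hv1 : ∫ x in Ioc 0 ld, f x = A / b₁ * exp (b₁ * ld) - A / b₁ := by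
    rw [integral_Ioc_eq_integral_Ioo, ← setIntegral_congr_fun measurableSet_Ioo heq1,
      ← integral_Ioc_eq_integral_Ioo, ← intervalIntegral.integral_of_le hld.le]
    have h := intervalIntegral.integral_eq_sub_of_hasDerivAt
      (f := fun x => A / b₁ * exp (b₁ * x)) (f' := g₁) (a := 0) (b := ld)
      (fun x _ => by
        have h' := (hexp b₁ x).const_mul (A / b₁)
        convert h' using 1
        show A * exp (b₁ * x) = A / b₁ * (exp (b₁ * x) * b₁)
        field_simp
        all_goals rfl) (hcont1.intervalIntegrable 0 ld)
    rw [h]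
    simp
  -- piece 2
  have hv2 : ∫ x in Ioc ld lu, f x =
      (C₀ * b₁ * exp (b₁ * lu) * lu - C₀ * exp (b₁ * lu) + K / b₂ * exp (b₂ * (lu - ld)) - K * lu)
      - (C₀ * b₁ * exp (b₁ * lu) * ld - C₀ * exp (b₁ * ld) + K / b₂ - K * ld) := by
    rw [integral_Ioc_eq_integral_Ioo, ← setIntegral_congr_fun measurableSet_Ioo heq2,
      ← integral_Ioc_eq_integral_Ioo, ← intervalIntegral.integral_of_le hdu.le]
    have h := intervalIntegral.integral_eq_sub_of_hasDerivAt
      (f := fun x => C₀ * b₁ * exp (b₁ * lu) * x - C₀ * exp (b₁ * x)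
          + K / b₂ * exp (b₂ * (x - ld)) - K * x)
      (f' := g₂) (a := ld) (b := lu)
      (fun x _ => by
        have h1 : HasDerivAt (fun y : ℝ => C₀ * b₁ * exp (b₁ * lu) * y)
            (C₀ * b₁ * exp (b₁ * lu)) x := by
          simpa using (hasDerivAt_id x).const_mul (C₀ * b₁ * exp (b₁ * lu))
        have h2 := (hexp b₁ x).const_mul C₀
        have h3 := (hexp' b₂ ld x).const_mul (K / b₂)
        have h4 : HasDerivAt (fun y : ℝ => K * y) K x := by
          simpa using (hasDerivAt_id x).const_mul K
        have h5 := ((h1.sub h2).add h3).sub h4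
        convert h5 using 1
        show C₀ * b₁ * (exp (b₁ * lu) - exp (b₁ * x)) + K * (exp (b₂ * (x - ld)) - 1)
          = C₀ * b₁ * exp (b₁ * lu) - C₀ * (exp (b₁ * x) * b₁)
            + K / b₂ * (exp (b₂ * (x - ld)) * b₂) - K
        field_simp
        ring
        rfl) (hcont2.intervalIntegrable ld lu)
    rw [h]
    norm_num
  -- piece 3
  have hv3 : ∫ x in Ioi lu, f x = - (D / b₂) := by
    rw [← setIntegral_congr_fun measurableSet_Ioi heq3]
    have hderiv : ∀ x ∈ Ici lu, HasDerivAt (fun y => D / b₂ * exp (b₂ * (y - lu))) (g₃ x) x := by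
      intro x _
      have h' := (hexp' b₂ lu x).const_mul (D / b₂)
      convert h' using 1
      show D * exp (b₂ * (x - lu)) = D / b₂ * (exp (b₂ * (x - lu)) * b₂)
      field_simp
      all_goals rfl
    have htend : Tendsto (fun y => D / b₂ * exp (b₂ * (y - lu))) atTop (𝓝 0) := by
      have h0 : Tendsto (fun y : ℝ => y - lu) atTop atTop := by
        simpa [sub_eq_add_neg] using
          tendsto_atTop_add_const_right atTop (-lu) (tendsto_id (α := ℝ))
      have h1 : Tendsto (fun y : ℝ => b₂ * (y - lu)) atTop atBot :=
        (tendsto_const_mul_atBot_of_neg hb₂).2 h0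
      have h2 : Tendsto (fun y : ℝ => exp (b₂ * (y - lu))) atTop (𝓝 0) :=
        Real.tendsto_exp_atBot.comp h1
      simpa using h2.const_mul (D / b₂)
    rw [integral_Ioi_of_hasDerivAt_of_tendsto' hderiv hIg₃ htend]
    simp
  rw [hsplit, hv1, hv2, hv3, hA, hK, hD]
  have hexpu : exp (b₁ * lu) = exp (b₁ * (lu - ld)) * exp (b₁ * ld) := by
    rw [← Real.exp_add]; ring_nf
  rw [hexpu] at hden hC₀ ⊢
  generalize exp (b₁ * ld) = u at hden hC₀ ⊢
  generalize exp (b₁ * (lu - ld)) = v at hden hC₀ ⊢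
  generalize exp (b₂ * (lu - ld)) = w at hden hC₀ ⊢
  have hC₀' : C₀ * (1 - v + b₁ * (lu - ld) * (v * u) -
      b₁ ^ 2 / b₂ * (lu - ld) * ρ₁₂ * (v * u)) = 1 := by
    rw [hC₀]; exact inv_mul_cancel₀ hden
  refine Eq.trans ?_ hC₀'
  field_simp
  ring
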